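/- Let E be a finite-dimensional real inner product space, Q ⊆ E a nonempty convex set, h : E → ℝ a differentiable convex function with Bregman divergence V(y,x) = h(y) − h(x) − ⟨∇h(x), y − x⟩, and f : E → ℝ differentiable. Fix x ∈ Q, η > 0, M ≥ 0, μ ≥ 0, and suppose (i) ⟨∇f(x), x − z⟩ ≤ M·√(2·V(z,x)) for all z ∈ E (M-relative Lipschitz continuity at x) and (ii) f(u) ≥ f(x) + ⟨∇f(x), u − x⟩ + μ·V(u,x) for all u ∈ Q (μ-relative strong convexity). Let y ∈ E satisfy ∇h(y) = ∇h(x) − η·∇f(x) and let x⁺ ∈ Q minimize z ↦ V(z,y) over Q. Then for every u ∈ Q: f(x) − f(u) ≤ η·M² + (1/η)·(V(u,x) − V(u,x⁺)) − μ·V(u,x). -/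

import Mathlib

open scoped RealInnerProductSpace

/-- The Bregman divergence `V(y,x) = h(y) − h(x) − ⟨∇h(x), y − x⟩`. -/
noncomputable def breg {E : Type*} [NormedAddCommGroup E] [InnerProductSpace ℝ E]
    [CompleteSpace E] (h : E → ℝ) (y x : E) : ℝ :=
  h y - h x - ⟪gradient h x, y - x⟫

/-- Tangent-line inequality for a differentiable convex function. -/
lemma breg_nonneg_aux {E : Type*} [NormedAddCommGroup E] [InnerProductSpace ℝ E]
    [FiniteDimensional ℝ E] (h : E → ℝ) (hdiff : Differentiable ℝ h)
    (hconv : ConvexOn ℝ Set.univ h) (z x : E) :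
    ⟪gradient h x, z - x⟫ ≤ h z - h x := by
  set L : ℝ →ᵃ[ℝ] E := AffineMap.lineMap x z with hL
  have hφconv : ConvexOn ℝ Set.univ (h ∘ L) := by
    simpa using hconv.comp_affineMap L
  have hLeq : (fun t : ℝ => L t) = fun t : ℝ => t • (z - x) + x := by
    funext t
    simp [hL, AffineMap.lineMap_apply, vsub_eq_sub, vadd_eq_add]
  have hLder : HasDerivAt (fun t : ℝ => L t) (z - x) 0 := by
    rw [hLeq]
    simpa using ((hasDerivAt_id (0:ℝ)).smul_const (z - x)).add_const x
  have hgrad : HasGradientAt h (gradient h x) x := (hdiff x).hasGradientAt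
  have hhf : HasFDerivAt h (InnerProductSpace.toDual ℝ E (gradient h x)) x :=
    hgrad.hasFDerivAt
  have hL0 : L 0 = x := by simp [hL]
  have hφder : HasDerivAt (h ∘ L) ⟪gradient h x, z - x⟫ 0 := by
    have hhf' : HasFDerivAt h (InnerProductSpace.toDual ℝ E (gradient h x)) (L 0) := by
      rw [hL0]; exact hhf
    have := hhf'.comp_hasDerivAt 0 hLder
    simpa [InnerProductSpace.toDual_apply_apply] using this
  have := hφconv.le_slope_of_hasDerivAt (Set.mem_univ 0) (Set.mem_univ 1)
    zero_lt_one hφder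
  simpa [slope_def_field, hL] using this

theorem mirror_descent_one_step
    {E : Type*} [NormedAddCommGroup E] [InnerProductSpace ℝ E] [FiniteDimensional ℝ E]
    (Q : Set E) (hQne : Q.Nonempty) (hQconv : Convex ℝ Q)
    (h : E → ℝ) (hdiff : Differentiable ℝ h) (hconv : ConvexOn ℝ Set.univ h)
    (f : E → ℝ) (hfdiff : Differentiable ℝ f)
    (x : E) (hxQ : x ∈ Q) (η M μ : ℝ) (hη : 0 < η) (hM : 0 ≤ M) (hμ : 0 ≤ μ)
    (hLip : ∀ z : E, ⟪gradient f x, x - z⟫ ≤ M * Real.sqrt (2 * breg h z x))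
    (hSC : ∀ u ∈ Q, f x + ⟪gradient f x, u - x⟫ + μ * breg h u x ≤ f u)
    (y : E) (hy : gradient h y = gradient h x - η • gradient f x)
    (xp : E) (hxpQ : xp ∈ Q) (hxp : IsMinOn (fun z => breg h z y) Q xp) :
    ∀ u ∈ Q, f x - f u ≤ η * M ^ 2 + (1 / η) * (breg h u x - breg h u xp) - μ * breg h u x := by
  intro u huQ
  set g := gradient f x
  set p := gradient h x
  set q := gradient h y
  set r := gradient h xp
  -- first-order optimality of the Bregman projection
  have hopt : (0:ℝ) ≤ ⟪r - q, u - xp⟫ := by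
    have heq : (fun z => breg h z y) =
        fun z => (h z - ⟪q, z⟫) - (h y - ⟪q, y⟫) := by
      funext z
      simp only [breg, inner_sub_right]
      ring
    have hhf : HasFDerivAt h (InnerProductSpace.toDual ℝ E r) xp :=
      (hdiff xp).hasGradientAt.hasFDerivAt
    have hinner : HasFDerivAt (fun z : E => ⟪q, z⟫)
        (InnerProductSpace.toDual ℝ E q) xp := by
      convert (InnerProductSpace.toDual ℝ E q).hasFDerivAt (x := xp) using 1
      funext z; simp [InnerProductSpace.toDual_apply_apply]
    have hF : HasFDerivAt (fun z => breg h z y)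
        (InnerProductSpace.toDual ℝ E r - InnerProductSpace.toDual ℝ E q) xp := by
      rw [heq]
      exact (hhf.sub hinner).sub_const _
    have hcone : u - xp ∈ posTangentConeAt Q xp :=
      sub_mem_posTangentConeAt_of_segment_subset (hQconv.segment_subset hxpQ huQ)
    have := hxp.localize.hasFDerivWithinAt_nonneg hF.hasFDerivWithinAt hcone
    simpa [InnerProductSpace.toDual_apply_apply, inner_sub_left] using this
  -- p - q = η • g
  have hpq : ∀ v : E, ⟪p - q, v⟫ = η * ⟪g, v⟫ := by
    intro v
    rw [hy]
    simp [real_inner_smul_left]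
  -- nonnegativity of the Bregman divergence V(xp, x)
  have hVpx : (0:ℝ) ≤ breg h xp x := by
    have := breg_nonneg_aux h hdiff hconv xp x
    simp only [breg]
    linarith
  -- relative Lipschitz bound at xp
  have hlip := hLip xp
  set s := Real.sqrt (2 * breg h xp x) with hs
  have hs0 : 0 ≤ s := Real.sqrt_nonneg _
  have hs2 : s ^ 2 = 2 * breg h xp x := by
    rw [hs, Real.sq_sqrt]; linarith
  have hAM : M * s ≤ η * M ^ 2 / 2 + breg h xp x / η := by
    have key : 0 ≤ (η * M - s) ^ 2 := sq_nonneg _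
    have hexp : η * (η * M ^ 2 / 2 + breg h xp x / η) = η ^ 2 * M ^ 2 / 2 + breg h xp x := by
      field_simp
    have h2 : η * (M * s) ≤ η * (η * M ^ 2 / 2 + breg h xp x / η) := by
      rw [hexp]; nlinarith [hs2]
    exact (mul_le_mul_iff_right₀ hη).mp h2
  -- three-point identity
  have h3pt : ⟪p - r, xp - u⟫ = breg h u x - breg h u xp - breg h xp x := by
    simp only [breg, inner_sub_left, inner_sub_right]
    ring
  -- key chain
  have hkey : η * ⟪g, xp - u⟫ ≤ breg h u x - breg h u xp - breg h xp x := by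
    have hsplit : ⟪p - q, xp - u⟫ = ⟪p - r, xp - u⟫ + ⟪r - q, xp - u⟫ := by
      simp only [inner_sub_left]; ring
    have hneg : ⟪r - q, xp - u⟫ ≤ 0 := by
      have : ⟪r - q, xp - u⟫ = -⟪r - q, u - xp⟫ := by
        rw [← inner_neg_right]; congr 1; abel
      linarith [hopt, this.le, this.ge]
    calc η * ⟪g, xp - u⟫ = ⟪p - q, xp - u⟫ := (hpq _).symm
      _ = ⟪p - r, xp - u⟫ + ⟪r - q, xp - u⟫ := hsplit
      _ ≤ ⟪p - r, xp - u⟫ := by linarith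
      _ = breg h u x - breg h u xp - breg h xp x := h3pt
  -- strong convexity step
  have hsc := hSC u huQ
  have hxsub : ⟪g, x - u⟫ = ⟪g, x - xp⟫ + ⟪g, xp - u⟫ := by
    rw [← inner_add_right]; congr 1; abel
  have hux : ⟪g, u - x⟫ = -⟪g, x - u⟫ := by
    rw [← inner_neg_right]; congr 1; abel
  have h1 : f x - f u ≤ ⟪g, x - u⟫ - μ * breg h u x := by linarith [hsc, hux.le, hux.ge]
  have h2 : ⟪g, xp - u⟫ ≤ (breg h u x - breg h u xp - breg h xp x) / η :=
    (le_div_iff₀ hη).mpr (by linarith [hkey])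
  have h3 : ⟪g, x - xp⟫ ≤ η * M ^ 2 / 2 + breg h xp x / η := le_trans hlip hAM
  have e1 : (breg h u x - breg h u xp - breg h xp x) / η + breg h xp x / η
      = (breg h u x - breg h u xp) / η := by ring
  have hsum : ⟪g, x - u⟫ ≤ η * M ^ 2 / 2 + (breg h u x - breg h u xp) / η := by
    rw [hxsub]; linarith
  have e2 : (1/η) * (breg h u x - breg h u xp) = (breg h u x - breg h u xp) / η := by ring
  have hM2 : η * M ^ 2 / 2 ≤ η * M ^ 2 := by nlinarith
  linarith
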